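/- arXiv:0904.0242 — 2 statements merged into one kernel-verified Lean document; each statement's English description precedes it below -/
import Mathlib

section
/- Let m > n ≥ 0. Then every generating m-tuple of the free abelian group ℤⁿ is reducible, i.e. Nielsen equivalent to an m-tuple whose last entry is the identity. -/
/-- An elementary Nielsen transformation on `m`-tuples of elements of an additive
group `G`: swapping two entries, negating an entry, or replacing the `i`-th entry
`gᵢ` by `gᵢ + gⱼ` for some `j ≠ i`. -/
inductive AddNielsenStep {G : Type*} [AddGroup G] {m : ℕ} : (Fin m → G) → (Fin m → G) → Prop
  | swap (g : Fin m → G) (i j : Fin m) : AddNielsenStep g (g ∘ Equiv.swap i j)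
  | neg (g : Fin m → G) (i : Fin m) : AddNielsenStep g (Function.update g i (-(g i)))
  | add (g : Fin m → G) (i j : Fin m) (hij : i ≠ j) :
      AddNielsenStep g (Function.update g i (g i + g j))

/-- Two `m`-tuples are Nielsen equivalent if one is obtained from the other by a
finite sequence of elementary Nielsen transformations. -/
def AddNielsenEquiv {G : Type*} [AddGroup G] {m : ℕ} (g h : Fin m → G) : Prop :=
  Relation.EqvGen AddNielsenStep g h

section Aux

variable {G : Type*} [AddCommGroup G] {m : ℕ}

private lemma sum_split {M : Type*} [AddCommMonoid M] (F : Fin m → M) (i j : Fin m)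
    (hij : i ≠ j) :
    ∑ k, F k = F i + F j + ∑ k ∈ (Finset.univ.erase i).erase j, F k := by
  rw [← Finset.add_sum_erase _ F (Finset.mem_univ i),
    ← Finset.add_sum_erase _ F (Finset.mem_erase.mpr ⟨hij.symm, Finset.mem_univ j⟩),
    add_assoc]

/-- One or two Nielsen steps realizing a Euclidean reduction on coefficients. -/
private lemma combo (g : Fin m → G) (c : Fin m → ℤ) (i j : Fin m) (hij : i ≠ j)
    (a : ℤ) (ha : a = c i ∨ a = -(c i)) :
    ∃ g' : Fin m → G, AddNielsenEquiv g g' ∧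
      ∑ k, (Function.update (Function.update c i a) j (c j - a)) k • g' k
        = ∑ k, c k • g k := by
  set c' := Function.update (Function.update c i a) j (c j - a) with hc'
  have hci' : c' i = a := by simp [hc', Function.update, hij]
  have hcj' : c' j = c j - a := by simp [hc', Function.update]
  have hck' : ∀ k, k ≠ i → k ≠ j → c' k = c k := by
    intro k hki hkj; simp [hc', Function.update, hki, hkj]
  rcases ha with ha | ha
  · refine ⟨Function.update g i (g i + g j), Relation.EqvGen.rel _ _ (.add g i j hij), ?_⟩
    rw [sum_split (fun k => c' k • Function.update g i (g i + g j) k) i j hij,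
      sum_split (fun k => c k • g k) i j hij]
    have hrest : ∑ k ∈ (Finset.univ.erase i).erase j,
        c' k • Function.update g i (g i + g j) k
        = ∑ k ∈ (Finset.univ.erase i).erase j, c k • g k := by
      refine Finset.sum_congr rfl fun k hk => ?_
      have hkj := (Finset.mem_erase.mp hk).1
      have hki := (Finset.mem_erase.mp (Finset.mem_erase.mp hk).2).1
      rw [hck' k hki hkj, Function.update_of_ne hki]
    rw [hrest]
    congr 1
    rw [hci', hcj', Function.update_self, Function.update_of_ne hij.symm, ha]
    rw [smul_add, sub_smul]
    abel
  · refine ⟨Function.update g i (-(g i) + g j), ?_, ?_⟩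
    · refine Relation.EqvGen.trans _ _ _
        (Relation.EqvGen.rel _ _ (.neg g i)) ?_
      have := Relation.EqvGen.rel _ _
        (AddNielsenStep.add (Function.update g i (-(g i))) i j hij)
      simpa [Function.update_self, Function.update_of_ne hij.symm,
        Function.update_idem] using this
    · rw [sum_split (fun k => c' k • Function.update g i (-(g i) + g j) k) i j hij,
        sum_split (fun k => c k • g k) i j hij]
      have hrest : ∑ k ∈ (Finset.univ.erase i).erase j,
          c' k • Function.update g i (-(g i) + g j) k
          = ∑ k ∈ (Finset.univ.erase i).erase j, c k • g k := by
        refine Finset.sum_congr rfl fun k hk => ?_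
        have hkj := (Finset.mem_erase.mp hk).1
        have hki := (Finset.mem_erase.mp (Finset.mem_erase.mp hk).2).1
        rw [hck' k hki hkj, Function.update_of_ne hki]
      rw [hrest]
      congr 1
      rw [hci', hcj', Function.update_self, Function.update_of_ne hij.symm, ha]
      rw [smul_add, sub_smul, neg_smul, neg_smul, smul_neg]
      abel

variable [NoZeroSMulDivisors ℤ G]

/-- Main reduction: a nontrivial integer relation lets us Nielsen-reduce some
entry to `0`. Strong induction on the `ℓ¹`-size of the coefficient vector. -/
private lemma reduce (N : ℕ) (g : Fin m → G) (c : Fin m → ℤ)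
    (hN : ∑ k, (c k).natAbs ≤ N) (hrel : ∑ k, c k • g k = 0)
    (i0 : Fin m) (h0 : c i0 ≠ 0) :
    ∃ (h : Fin m → G) (i : Fin m), AddNielsenEquiv g h ∧ h i = 0 := by
  induction N generalizing g c i0 with
  | zero =>
    have hle : (c i0).natAbs ≤ ∑ k, (c k).natAbs :=
      Finset.single_le_sum (f := fun k => (c k).natAbs) (fun k _ => Nat.zero_le _)
        (Finset.mem_univ i0)
    exact absurd (Int.natAbs_eq_zero.mp (by omega)) h0
  | succ N ih =>
    by_cases hall : ∀ k, k ≠ i0 → c k = 0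
    · -- only one nonzero coefficient: g i0 = 0
      have : ∑ k, c k • g k = c i0 • g i0 := by
        refine Finset.sum_eq_single i0 (fun k _ hk => by rw [hall k hk, zero_smul]) ?_
        intro h; exact absurd (Finset.mem_univ i0) h
      rw [this] at hrel
      rcases smul_eq_zero.mp hrel with h | h
      · exact absurd h h0
      · exact ⟨g, i0, Relation.EqvGen.refl g, h⟩
    · push_neg at hall
      obtain ⟨j0, hj0ne, hj0⟩ := hall
      -- choose i with the smaller coefficient (in abs value), j the other
      obtain ⟨i, j, hij, hci, hcj, hle⟩ :
          ∃ i j : Fin m, i ≠ j ∧ c i ≠ 0 ∧ c j ≠ 0 ∧ (c i).natAbs ≤ (c j).natAbs := by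
        rcases le_total (c i0).natAbs (c j0).natAbs with h | h
        · exact ⟨i0, j0, Ne.symm hj0ne, h0, hj0, h⟩
        · exact ⟨j0, i0, hj0ne, hj0, h0, h⟩
      -- choose a = ±(c i) with the same sign as c j
      set a : ℤ := if 0 < c i * c j then c i else -(c i) with haa
      have ha : a = c i ∨ a = -(c i) := by
        by_cases h : 0 < c i * c j <;> simp [haa, h]
      have haabs : a.natAbs = (c i).natAbs := by
        rcases ha with h | h <;> simp [h]
      have hasign : 0 < a * c j := by
        rcases lt_trichotomy (c i * c j) 0 with h | h | h
        · have ha' : a = -(c i) := by simp [haa, not_lt.mpr h.le, h.ne]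
          rw [ha', neg_mul]
          exact neg_pos.mpr h
        · exact absurd (mul_eq_zero.mp h) (by tauto)
        · have ha' : a = c i := by simp [haa, h]
          rw [ha']; exact h
      have hane : a ≠ 0 := by
        intro h; rw [h, zero_mul] at hasign; exact lt_irrefl 0 hasign
      have hdec : (c j - a).natAbs < (c j).natAbs := by
        rcases mul_pos_iff.mp hasign with ⟨h1, h2⟩ | ⟨h1, h2⟩ <;> omega
      obtain ⟨g', hg', hsum⟩ := combo g c i j hij a ha
      set c' := Function.update (Function.update c i a) j (c j - a) with hc'
      have hrel' : ∑ k, c' k • g' k = 0 := by rw [hsum]; exact hrel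
      have hci' : c' i = a := by simp [hc', Function.update, hij]
      have hmeas : ∑ k, (c' k).natAbs ≤ N := by
        have e1 : ∑ k, (c' k).natAbs
            = (c' i).natAbs + (c' j).natAbs
              + ∑ k ∈ (Finset.univ.erase i).erase j, (c' k).natAbs :=
          sum_split _ i j hij
        have e2 : ∑ k, (c k).natAbs
            = (c i).natAbs + (c j).natAbs
              + ∑ k ∈ (Finset.univ.erase i).erase j, (c k).natAbs :=
          sum_split _ i j hij
        have e3 : ∑ k ∈ (Finset.univ.erase i).erase j, (c' k).natAbs
            = ∑ k ∈ (Finset.univ.erase i).erase j, (c k).natAbs := by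
          refine Finset.sum_congr rfl fun k hk => ?_
          have hkj := (Finset.mem_erase.mp hk).1
          have hki := (Finset.mem_erase.mp (Finset.mem_erase.mp hk).2).1
          simp [hc', Function.update, hki, hkj]
        have hcj' : c' j = c j - a := by simp [hc', Function.update]
        rw [e1, e3, hci', hcj', haabs]
        rw [e2] at hN
        omega
      obtain ⟨h, i', hhequiv, hhi⟩ := ih g' c' hmeas hrel' i (hci' ▸ hane)
      exact ⟨h, i', Relation.EqvGen.trans _ _ _ hg' hhequiv, hhi⟩

end Aux

/-- If `m > n ≥ 0`, then every generating `m`-tuple of the free abelian group `ℤⁿ`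
is reducible, i.e. Nielsen equivalent to an `m`-tuple whose last entry is the
identity. -/
theorem zn_oversized_generating_tuple_reducible (n m : ℕ) (hm : n < m)
    (g : Fin m → (Fin n → ℤ))
    (hg : AddSubgroup.closure (Set.range g) = ⊤) :
    ∃ h : Fin m → (Fin n → ℤ),
      AddNielsenEquiv g h ∧ h ⟨m - 1, by omega⟩ = 0 := by
  have hnli : ¬ LinearIndependent ℤ g := by
    intro hli
    have := hli.fintype_card_le_finrank
    rw [Module.finrank_pi] at this
    simp only [Fintype.card_fin] at this
    omega
  obtain ⟨c, hrel, i0, h0⟩ := Fintype.not_linearIndependent_iff.mp hnli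
  obtain ⟨h, i, hequiv, hi⟩ :=
    reduce (∑ k, (c k).natAbs) g c le_rfl hrel i0 h0
  refine ⟨h ∘ Equiv.swap i ⟨m - 1, by omega⟩,
    Relation.EqvGen.trans _ _ _ hequiv (Relation.EqvGen.rel _ _ (.swap h i _)), ?_⟩
  simp [Equiv.swap_apply_right, hi]
end

section
/- Let p ≥ 2 and q be coprime integers, and let A = [[1,0],[1,1]] and B = [[1−pq, p²],[−q², 1+pq]] in SL(2,ℤ). Then the orbit of the set {0/1, p/q} under the Möbius action of the subgroup ⟨A,B⟩ on ℚ ∪ {∞} is a strictly smaller subset of ℚ ∪ {∞}: every slope a/b (in lowest terms) in this orbit satisfies p ∣ a, so in particular the slope 1/1 does not lie in the orbit. -/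
/-- The parabolic matrix `[[1,0],[1,1]]` in `SL(2,ℤ)`, representing the Dehn twist
of the torus along the simple closed curve of slope `0/1` (the primitive vector
`(0,1)`). -/
def dehnTwistA : Matrix.SpecialLinearGroup (Fin 2) ℤ :=
  ⟨!![1, 0; 1, 1], by norm_num [Matrix.det_fin_two_of]⟩

/-- The parabolic matrix `[[1 - pq, p²],[-q², 1 + pq]]` in `SL(2,ℤ)`, representing
the Dehn twist of the torus along the simple closed curve of slope `p/q` (the
primitive vector `(p,q)`). -/
def dehnTwistB (p q : ℤ) : Matrix.SpecialLinearGroup (Fin 2) ℤ :=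
  ⟨!![1 - p * q, p ^ 2; -q ^ 2, 1 + p * q], by rw [Matrix.det_fin_two_of]; ring⟩

lemma key_div (p q : ℤ) (g : Matrix.SpecialLinearGroup (Fin 2) ℤ)
    (hg : g ∈ Subgroup.closure
        ({dehnTwistA, dehnTwistB p q} : Set (Matrix.SpecialLinearGroup (Fin 2) ℤ))) :
    p ∣ (g : Matrix (Fin 2) (Fin 2) ℤ) 0 1 := by
  induction hg using Subgroup.closure_induction with
  | mem x hx =>
    rcases hx with hx | hx <;> subst hx
    · simp [dehnTwistA]
    · simp [dehnTwistB]
  | one => simp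
  | mul x y hx hy ihx ihy =>
    have : ((x * y : Matrix.SpecialLinearGroup (Fin 2) ℤ) : Matrix (Fin 2) (Fin 2) ℤ) 0 1
        = (x : Matrix (Fin 2) (Fin 2) ℤ) 0 0 * (y : Matrix (Fin 2) (Fin 2) ℤ) 0 1
        + (x : Matrix (Fin 2) (Fin 2) ℤ) 0 1 * (y : Matrix (Fin 2) (Fin 2) ℤ) 1 1 := by
      simp [Matrix.SpecialLinearGroup.coe_mul, Matrix.mul_apply, Fin.sum_univ_two]
    rw [this]
    exact dvd_add (Dvd.dvd.mul_left ihy _) (Dvd.dvd.mul_right ihx _)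
  | inv x hx ihx =>
    have : ((x⁻¹ : Matrix.SpecialLinearGroup (Fin 2) ℤ) : Matrix (Fin 2) (Fin 2) ℤ) 0 1
        = -(x : Matrix (Fin 2) (Fin 2) ℤ) 0 1 := by
      rw [Matrix.SpecialLinearGroup.coe_inv, Matrix.adjugate_fin_two]
      simp
    rw [this]
    exact ihx.neg_right

lemma key_div0 (p q : ℤ) (g : Matrix.SpecialLinearGroup (Fin 2) ℤ)
    (hg : g ∈ Subgroup.closure
        ({dehnTwistA, dehnTwistB p q} : Set (Matrix.SpecialLinearGroup (Fin 2) ℤ)))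
    (v : Fin 2 → ℤ) (hv : v ∈ ({![0, 1], ![p, q]} : Set (Fin 2 → ℤ))) :
    p ∣ (g : Matrix (Fin 2) (Fin 2) ℤ).mulVec v 0 := by
  have h := key_div p q g hg
  rcases hv with hv | hv <;> subst hv <;>
    simp [Matrix.mulVec, dotProduct, Fin.sum_univ_two]
  · exact h
  · exact h.mul_right q

/-- A matrix in `SL(2,ℤ)` acts on slopes of primitive integer vectors, sending the
primitive vector `(u,v)` (slope `u/v`) to `(au + bv, cu + dv)`.  The orbit of the
slopes `{0/1, p/q}` under the subgroup generated by the Dehn twists `A` and `B` is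
strictly smaller than `ℚ ∪ {∞}`: every slope `a/b` in the orbit satisfies `p ∣ a`;
in particular the slope `1/1` does not lie in the orbit. -/
theorem twist_orbit_strictly_smaller (p q : ℤ) (hp : 2 ≤ p) (hpq : IsCoprime p q) :
    (∀ g ∈ Subgroup.closure
        ({dehnTwistA, dehnTwistB p q} : Set (Matrix.SpecialLinearGroup (Fin 2) ℤ)),
      ∀ v ∈ ({![0, 1], ![p, q]} : Set (Fin 2 → ℤ)),
        p ∣ (g : Matrix (Fin 2) (Fin 2) ℤ).mulVec v 0) ∧
    (∀ g ∈ Subgroup.closure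
        ({dehnTwistA, dehnTwistB p q} : Set (Matrix.SpecialLinearGroup (Fin 2) ℤ)),
      ∀ v ∈ ({![0, 1], ![p, q]} : Set (Fin 2 → ℤ)),
        (g : Matrix (Fin 2) (Fin 2) ℤ).mulVec v ≠ ![1, 1] ∧
        (g : Matrix (Fin 2) (Fin 2) ℤ).mulVec v ≠ ![-1, -1]) := by
  refine ⟨fun g hg v hv => key_div0 p q g hg v hv, fun g hg v hv => ?_⟩
  have h := key_div0 p q g hg v hv
  constructor <;> intro heq <;> rw [heq] at h <;>
    simp only [Matrix.cons_val_zero] at h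
  · have := Int.isUnit_iff.mp (isUnit_of_dvd_unit h isUnit_one)
    omega
  · have := Int.isUnit_iff.mp (isUnit_of_dvd_unit h isUnit_one.neg)
    omega
end
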